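/- For every real γ > 0, ∫₀^∞ ∫₀^{x₂} x₁ · x₂ · exp( −x₁ − x₂ − (x₁² + x₂²)/(8γ²) ) dx₁ dx₂ = 8γ⁴ · ( 1 − 2√2·γ·W(√2·γ) )². -/

import Mathlib

open MeasureTheory Real

/-- `W x = exp (x²) · ∫_x^∞ exp (−t²) dt`, i.e. `(√π/2)·erfcx x`. -/
noncomputable def W (x : ℝ) : ℝ := Real.exp (x ^ 2) * ∫ t in Set.Ioi x, Real.exp (-(t ^ 2))

open Set Filter


lemma Ioi_comp_add (f : ℝ → ℝ) (a c : ℝ) : ∫ x in Set.Ioi a, f (x + c) = ∫ x in Set.Ioi (a + c), f x := by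
  have := MeasurePreserving.setIntegral_preimage_emb
    (measurePreserving_add_right volume c) (measurableEmbedding_addRight c) f (Set.Ioi (a + c))
  simpa using this

lemma gid (γ : ℝ) (hγ : 0 < γ) (x : ℝ) :
    Real.exp (-x - x ^ 2 / (8 * γ ^ 2)) =
      Real.exp (2 * γ ^ 2) * Real.exp (-(((2 * Real.sqrt 2 * γ)⁻¹ * x + Real.sqrt 2 * γ) ^ 2)) := by
  rw [← Real.exp_add]
  congr 1
  have h2 : Real.sqrt 2 ^ 2 = 2 := Real.sq_sqrt (by norm_num)
  have hs : Real.sqrt 2 ≠ 0 := by positivity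
  field_simp
  linear_combination (32 * γ ^ 6 * (Real.sqrt 2 ^ 2 + 2) - 4 * x ^ 2 * γ ^ 2 - 64 * γ ^ 6 + (x ^ 2 * (4 * γ ^ 2 - 4) + 32 * γ ^ 4 * Real.sqrt 2 ^ 2 - 32 * γ ^ 6 * Real.sqrt 2 ^ 2)) * h2

lemma Jval (γ : ℝ) (hγ : 0 < γ) :
    ∫ x in Set.Ioi (0:ℝ), Real.exp (-x - x ^ 2 / (8 * γ ^ 2)) =
      2 * Real.sqrt 2 * γ * W (Real.sqrt 2 * γ) := by
  have hb : 0 < (2 * Real.sqrt 2 * γ)⁻¹ := by positivity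
  calc ∫ x in Set.Ioi (0:ℝ), Real.exp (-x - x ^ 2 / (8 * γ ^ 2))
      = ∫ x in Set.Ioi (0:ℝ), Real.exp (2 * γ ^ 2) *
          Real.exp (-(((2 * Real.sqrt 2 * γ)⁻¹ * x + Real.sqrt 2 * γ) ^ 2)) := by
        exact setIntegral_congr_fun measurableSet_Ioi fun x _ => gid γ hγ x
    _ = Real.exp (2 * γ ^ 2) * ∫ x in Set.Ioi (0:ℝ),
          Real.exp (-((((2 * Real.sqrt 2 * γ)⁻¹) * x + Real.sqrt 2 * γ) ^ 2)) := by
        rw [integral_const_mul]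
    _ = Real.exp (2 * γ ^ 2) * (((2 * Real.sqrt 2 * γ)⁻¹)⁻¹ •
          ∫ x in Set.Ioi ((2 * Real.sqrt 2 * γ)⁻¹ * 0),
            Real.exp (-((x + Real.sqrt 2 * γ) ^ 2))) := by
        rw [integral_comp_mul_left_Ioi (fun y => Real.exp (-((y + Real.sqrt 2 * γ) ^ 2))) 0 hb]
    _ = Real.exp (2 * γ ^ 2) * ((2 * Real.sqrt 2 * γ) •
          ∫ x in Set.Ioi (0 + Real.sqrt 2 * γ), Real.exp (-(x ^ 2))) := by
        rw [inv_inv, mul_zero, Ioi_comp_add (fun y => Real.exp (-(y ^ 2))) 0 (Real.sqrt 2 * γ)]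
    _ = 2 * Real.sqrt 2 * γ * W (Real.sqrt 2 * γ) := by
        have h2 : Real.sqrt 2 ^ 2 = 2 := Real.sq_sqrt (by norm_num)
        rw [W, zero_add, smul_eq_mul]
        have : (Real.sqrt 2 * γ) ^ 2 = 2 * γ ^ 2 := by rw [mul_pow, h2]
        rw [this]; ring

lemma g_cont (γ : ℝ) : Continuous (fun x : ℝ => Real.exp (-x - x ^ 2 / (8 * γ ^ 2))) := by
  fun_prop

lemma g_int (γ : ℝ) (hγ : 0 < γ) :
    IntegrableOn (fun x : ℝ => Real.exp (-x - x ^ 2 / (8 * γ ^ 2))) (Set.Ioi 0) := by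
  refine (exp_neg_integrableOn_Ioi 0 one_pos).mono' ((g_cont γ).aestronglyMeasurable.restrict) ?_
  filter_upwards [ae_restrict_mem measurableSet_Ioi] with x hx
  rw [Real.norm_eq_abs, abs_of_pos (Real.exp_pos _), Real.exp_le_exp]
  have h1 : 0 ≤ x ^ 2 / (8 * γ ^ 2) := by positivity
  linarith

lemma K_int (γ : ℝ) (hγ : 0 < γ) :
    IntegrableOn (fun x : ℝ => (1 + x / (4 * γ ^ 2)) * Real.exp (-x - x ^ 2 / (8 * γ ^ 2)))
      (Set.Ioi 0) := by
  have hb : (0:ℝ) < (8 * γ ^ 2)⁻¹ := by positivity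
  have h1 : Integrable (fun x : ℝ => Real.exp (-((8 * γ ^ 2)⁻¹) * x ^ 2) +
      (4 * γ ^ 2)⁻¹ * |x * Real.exp (-((8 * γ ^ 2)⁻¹) * x ^ 2)|) :=
    (integrable_exp_neg_mul_sq hb).add (((integrable_mul_exp_neg_mul_sq hb).abs).const_mul _)
  refine (h1.integrableOn).mono' (Continuous.aestronglyMeasurable (by fun_prop) |>.restrict) ?_
  filter_upwards [ae_restrict_mem measurableSet_Ioi] with x hx
  have hx0 : (0:ℝ) < x := hx
  have he : Real.exp (-x - x ^ 2 / (8 * γ ^ 2)) ≤ Real.exp (-((8 * γ ^ 2)⁻¹) * x ^ 2) := by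
    rw [Real.exp_le_exp]
    have : -((8 * γ ^ 2)⁻¹) * x ^ 2 = - (x ^ 2 / (8 * γ ^ 2)) := by ring
    rw [this]; linarith
  have hnn : (0:ℝ) ≤ 1 + x / (4 * γ ^ 2) := by positivity
  rw [Real.norm_eq_abs, abs_of_nonneg (show (0:ℝ) ≤ (1 + x / (4 * γ ^ 2)) * Real.exp (-x - x ^ 2 / (8 * γ ^ 2)) by positivity)]
  calc (1 + x / (4 * γ ^ 2)) * Real.exp (-x - x ^ 2 / (8 * γ ^ 2))
      ≤ (1 + x / (4 * γ ^ 2)) * Real.exp (-((8 * γ ^ 2)⁻¹) * x ^ 2) := by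
        exact mul_le_mul_of_nonneg_left he hnn
    _ = Real.exp (-((8 * γ ^ 2)⁻¹) * x ^ 2) +
        (4 * γ ^ 2)⁻¹ * (x * Real.exp (-((8 * γ ^ 2)⁻¹) * x ^ 2)) := by ring
    _ ≤ _ := add_le_add le_rfl (mul_le_mul_of_nonneg_left (le_abs_self _) (by positivity))

lemma f_int (γ : ℝ) (hγ : 0 < γ) :
    IntegrableOn (fun x : ℝ => x * Real.exp (-x - x ^ 2 / (8 * γ ^ 2))) (Set.Ioi 0) := by
  have hb : (0:ℝ) < (8 * γ ^ 2)⁻¹ := by positivity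
  refine ((integrable_mul_exp_neg_mul_sq hb).abs.integrableOn).mono' (Continuous.aestronglyMeasurable (by fun_prop) |>.restrict) ?_
  filter_upwards [ae_restrict_mem measurableSet_Ioi] with x hx
  have hx0 : (0:ℝ) < x := hx
  have he : Real.exp (-x - x ^ 2 / (8 * γ ^ 2)) ≤ Real.exp (-((8 * γ ^ 2)⁻¹) * x ^ 2) := by
    rw [Real.exp_le_exp]
    have : -((8 * γ ^ 2)⁻¹) * x ^ 2 = - (x ^ 2 / (8 * γ ^ 2)) := by ring
    rw [this]; linarith
  rw [Real.norm_eq_abs, abs_of_nonneg (by positivity)]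
  calc x * Real.exp (-x - x ^ 2 / (8 * γ ^ 2))
      ≤ x * Real.exp (-((8 * γ ^ 2)⁻¹) * x ^ 2) := by
        exact mul_le_mul_of_nonneg_left he hx0.le
    _ ≤ |x * Real.exp (-((8 * γ ^ 2)⁻¹) * x ^ 2)| := le_abs_self _

lemma g_tendsto (γ : ℝ) (hγ : 0 < γ) :
    Tendsto (fun x : ℝ => Real.exp (-x - x ^ 2 / (8 * γ ^ 2))) atTop (nhds 0) := by
  refine Real.tendsto_exp_atBot.comp ?_
  refine tendsto_atBot_mono (fun x => ?_) tendsto_neg_atTop_atBot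
  have : 0 ≤ x ^ 2 / (8 * γ ^ 2) := by positivity
  linarith

lemma Kval (γ : ℝ) (hγ : 0 < γ) :
    ∫ x in Set.Ioi (0:ℝ), (1 + x / (4 * γ ^ 2)) * Real.exp (-x - x ^ 2 / (8 * γ ^ 2)) = 1 := by
  have hd : ∀ x ∈ Set.Ioi (0:ℝ),
      HasDerivAt (fun x : ℝ => -Real.exp (-x - x ^ 2 / (8 * γ ^ 2)))
        ((1 + x / (4 * γ ^ 2)) * Real.exp (-x - x ^ 2 / (8 * γ ^ 2))) x := by
    intro x _
    have h1 : HasDerivAt (fun x : ℝ => -x - x ^ 2 / (8 * γ ^ 2))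
        (-1 - 2 * x / (8 * γ ^ 2)) x := by
      have := ((hasDerivAt_id x).neg.sub (((hasDerivAt_pow 2 x)).div_const (8 * γ ^ 2)))
      exact this.congr_deriv (by ring)
    have := (h1.exp).neg
    exact this.congr_deriv (by field_simp; ring)
  have := integral_Ioi_of_hasDerivAt_of_tendsto
    (f := fun x : ℝ => -Real.exp (-x - x ^ 2 / (8 * γ ^ 2)))
    (a := 0) (m := 0)
    (((g_cont γ).neg).continuousWithinAt) hd (K_int γ hγ) (by simpa using (g_tendsto γ hγ).neg)
  rw [this]; norm_num

lemma Ival (γ : ℝ) (hγ : 0 < γ) :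
    ∫ x in Set.Ioi (0:ℝ), x * Real.exp (-x - x ^ 2 / (8 * γ ^ 2)) =
      4 * γ ^ 2 * (1 - 2 * Real.sqrt 2 * γ * W (Real.sqrt 2 * γ)) := by
  have hsplit : ∀ x : ℝ, x * Real.exp (-x - x ^ 2 / (8 * γ ^ 2)) =
      4 * γ ^ 2 * ((1 + x / (4 * γ ^ 2)) * Real.exp (-x - x ^ 2 / (8 * γ ^ 2))) -
      4 * γ ^ 2 * Real.exp (-x - x ^ 2 / (8 * γ ^ 2)) := by
    intro x
    have hγ2 : (4 * γ ^ 2) ≠ 0 := by positivity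
    field_simp
    ring
  rw [setIntegral_congr_fun measurableSet_Ioi fun x _ => hsplit x,
    integral_sub ((K_int γ hγ).const_mul _) ((g_int γ hγ).const_mul _),
    integral_const_mul, integral_const_mul, Kval γ hγ, Jval γ hγ]
  ring

theorem selfblocking_half_cone_term (γ : ℝ) (hγ : 0 < γ) :
    ∫ x₂ in Set.Ioi (0 : ℝ),
        ∫ x₁ in (0 : ℝ)..x₂,
          x₁ * x₂ * Real.exp (-x₁ - x₂ - (x₁ ^ 2 + x₂ ^ 2) / (8 * γ ^ 2))
      = 8 * γ ^ 4 * (1 - 2 * Real.sqrt 2 * γ * W (Real.sqrt 2 * γ)) ^ 2 := by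
  set f : ℝ → ℝ := fun x => x * Real.exp (-x - x ^ 2 / (8 * γ ^ 2)) with hf
  set F : ℝ → ℝ := fun x => ∫ t in (0:ℝ)..x, f t with hFdef
  set I : ℝ := ∫ x in Set.Ioi (0:ℝ), f x with hI
  have hfc : Continuous f := by fun_prop
  have hF' : ∀ x : ℝ, HasDerivAt F (f x) x := fun x =>
    intervalIntegral.integral_hasDerivAt_right (hfc.intervalIntegrable 0 x)
      (hfc.stronglyMeasurableAtFilter _ _) hfc.continuousAt
  have hFc : Continuous F := by
    rw [continuous_iff_continuousAt]; exact fun x => (hF' x).continuousAt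
  have hFt : Tendsto F atTop (nhds I) :=
    intervalIntegral_tendsto_integral_Ioi 0 (f_int γ hγ) tendsto_id
  have hfnonneg : ∀ x : ℝ, 0 ≤ x → 0 ≤ f x := fun x hx => by
    simp only [hf]; positivity
  have hFle : ∀ x ∈ Set.Ioi (0:ℝ), F x ≤ I := by
    intro x hx
    rw [hFdef]
    simp only
    rw [intervalIntegral.integral_of_le (le_of_lt hx)]
    refine setIntegral_mono_set (f_int γ hγ) ?_ (HasSubset.Subset.eventuallyLE Set.Ioc_subset_Ioi_self)
    filter_upwards [ae_restrict_mem measurableSet_Ioi] with t ht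
    exact hfnonneg t (le_of_lt ht)
  have hFnonneg : ∀ x ∈ Set.Ioi (0:ℝ), 0 ≤ F x := by
    intro x hx
    exact intervalIntegral.integral_nonneg (le_of_lt hx) fun t ht => hfnonneg t ht.1
  have hint : IntegrableOn (fun x => f x * F x) (Set.Ioi 0) := by
    refine (((f_int γ hγ).norm.mul_const I)).mono'
      ((hfc.mul hFc).aestronglyMeasurable.restrict) ?_
    filter_upwards [ae_restrict_mem measurableSet_Ioi] with x hx
    rw [norm_mul, Real.norm_eq_abs (F x), abs_of_nonneg (hFnonneg x hx)]
    exact mul_le_mul_of_nonneg_left (hFle x hx) (norm_nonneg _)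
  have hGd : ∀ x ∈ Set.Ioi (0:ℝ), HasDerivAt (fun x => F x ^ 2 / 2) (f x * F x) x := by
    intro x _
    have := ((hF' x).pow 2).div_const 2
    exact this.congr_deriv (by push_cast; ring)
  have hGt : Tendsto (fun x => F x ^ 2 / 2) atTop (nhds (I ^ 2 / 2)) :=
    (hFt.pow 2).div_const 2
  have hmain : ∫ x in Set.Ioi (0:ℝ), f x * F x = I ^ 2 / 2 := by
    have h0 : F 0 = 0 := intervalIntegral.integral_same
    have := integral_Ioi_of_hasDerivAt_of_tendsto
      (f := fun x => F x ^ 2 / 2) (a := 0) (m := I ^ 2 / 2)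
      ((hFc.pow 2).div_const 2).continuousWithinAt hGd hint hGt
    rw [this]
    simp only [h0]
    norm_num
  have hinner : ∀ x₂ ∈ Set.Ioi (0:ℝ),
      (∫ x₁ in (0:ℝ)..x₂, x₁ * x₂ * Real.exp (-x₁ - x₂ - (x₁ ^ 2 + x₂ ^ 2) / (8 * γ ^ 2)))
        = f x₂ * F x₂ := by
    intro x₂ _
    have hpt : ∀ x₁ : ℝ, x₁ * x₂ * Real.exp (-x₁ - x₂ - (x₁ ^ 2 + x₂ ^ 2) / (8 * γ ^ 2))
        = f x₁ * f x₂ := by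
      intro x₁
      simp only [hf]
      rw [show -x₁ - x₂ - (x₁ ^ 2 + x₂ ^ 2) / (8 * γ ^ 2)
          = (-x₁ - x₁ ^ 2 / (8 * γ ^ 2)) + (-x₂ - x₂ ^ 2 / (8 * γ ^ 2)) by ring,
        Real.exp_add]
      ring
    rw [intervalIntegral.integral_congr fun x₁ _ => hpt x₁,
      intervalIntegral.integral_mul_const]
    rw [hFdef]
    ring
  rw [setIntegral_congr_fun measurableSet_Ioi hinner, hmain, hI, Ival γ hγ]
  ring
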